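/- Let k ≥ 3 be an integer. The graph K_{k+1,k+1} minus a perfect matching is the unique graph G (up to isomorphism) satisfying: (1) G is k-connected; (2) the independence number of G is greater than k; (3) every independent set of cardinality k is a vertex cut of G. -/

import Mathlib

open SimpleGraph

/-- `G - S` is disconnected: some two remaining vertices are not connected. -/
def IsVertexCut {V : Type*} (G : SimpleGraph V) (S : Set V) : Prop :=
  ¬ (G.induce Sᶜ).Preconnected

/-- `G` is `k`-connected. -/
def KConnected {V : Type*} [Fintype V] (G : SimpleGraph V) (k : ℕ) : Prop :=
  k < Fintype.card V ∧ ∀ S : Finset V, S.card < k → ¬ IsVertexCut G ↑S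

/-- `S` is an independent set of `G`. -/
def IsIndep {V : Type*} (G : SimpleGraph V) (S : Set V) : Prop :=
  S.Pairwise fun u v => ¬ G.Adj u v

/-- `K_{s,s}` minus a perfect matching: `a i` is adjacent to `b j` iff `i ≠ j`. -/
def KssMinusPM (s : ℕ) : SimpleGraph (Fin s ⊕ Fin s) where
  Adj u v := (∃ i j, i ≠ j ∧ u = Sum.inl i ∧ v = Sum.inr j) ∨
    (∃ i j, i ≠ j ∧ u = Sum.inr i ∧ v = Sum.inl j)
  symm := by
    refine ⟨?_⟩
    rintro u v (⟨i, j, h, rfl, rfl⟩ | ⟨i, j, h, rfl, rfl⟩)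
    · exact Or.inr ⟨j, i, h.symm, rfl, rfl⟩
    · exact Or.inl ⟨j, i, h.symm, rfl, rfl⟩
  loopless := by
    refine ⟨?_⟩
    rintro u (⟨i, j, h, rfl, h2⟩ | ⟨i, j, h, rfl, h2⟩) <;> simp_all

namespace KAux

variable {V : Type*} {V' : Type*}

/-- One step in `G - S`. -/
def Stp (G : SimpleGraph V) (S : Set V) (u v : V) : Prop := u ∉ S ∧ v ∉ S ∧ G.Adj u v

/-- Connectivity in `G - S`, as a relation on ambient vertices. -/
def Rch (G : SimpleGraph V) (S : Set V) : V → V → Prop := Relation.ReflTransGen (Stp G S)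

lemma rch_refl {G : SimpleGraph V} {S : Set V} {u : V} : Rch G S u u :=
  Relation.ReflTransGen.refl

lemma stp_symm {G : SimpleGraph V} {S : Set V} : Symmetric (Stp G S) := by
  rintro u v ⟨h1, h2, h3⟩; exact ⟨h2, h1, h3.symm⟩

lemma rch_symm {G : SimpleGraph V} {S : Set V} {u v : V} (h : Rch G S u v) : Rch G S v u :=
  by
    haveI : Std.Symm (Stp G S) := ⟨fun a b hab => stp_symm hab⟩
    exact Std.Symm.symm (r := Relation.ReflTransGen (Stp G S)) _ _ h

lemma rch_trans {G : SimpleGraph V} {S : Set V} {u v w : V} (h : Rch G S u v)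
    (h' : Rch G S v w) : Rch G S u w := h.trans h'

lemma rch_single {G : SimpleGraph V} {S : Set V} {u v : V} (hu : u ∉ S) (hv : v ∉ S)
    (h : G.Adj u v) : Rch G S u v := Relation.ReflTransGen.single ⟨hu, hv, h⟩

lemma rch_cases_head {G : SimpleGraph V} {S : Set V} {u v : V} (h : Rch G S u v) :
    u = v ∨ ∃ c, Stp G S u c ∧ Rch G S c v :=
  Relation.ReflTransGen.cases_head h

lemma rch_not_mem {G : SimpleGraph V} {S : Set V} {u v : V} (hu : u ∉ S) (h : Rch G S u v) :
    v ∉ S := by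
  induction h with
  | refl => exact hu
  | tail _ h' _ => exact h'.2.1

lemma walk_rch {G : SimpleGraph V} {S : Set V} :
    ∀ {x y : ↥Sᶜ} (_ : (G.induce Sᶜ).Walk x y), Rch G S x.1 y.1 := by
  intro x y w
  induction w with
  | nil => exact rch_refl
  | @cons a b c h _ ih => exact Relation.ReflTransGen.head ⟨a.2, b.2, h⟩ ih

lemma rch_reachable {G : SimpleGraph V} {S : Set V} {u v : V} (h : Rch G S u v)
    (hu : u ∈ Sᶜ) : ∀ (hv : v ∈ Sᶜ), (G.induce Sᶜ).Reachable ⟨u, hu⟩ ⟨v, hv⟩ := by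
  induction h with
  | refl => exact fun hv => Reachable.refl _
  | @tail b c _ step ih =>
      intro hv
      exact (ih step.1).trans (SimpleGraph.Adj.reachable
        (show G.Adj b c from step.2.2 : (G.induce Sᶜ).Adj ⟨b, step.1⟩ ⟨c, hv⟩))

lemma cut_elim {G : SimpleGraph V} {S : Set V} (h : IsVertexCut G S) :
    ∃ u v, u ∉ S ∧ v ∉ S ∧ ¬ Rch G S u v := by
  by_contra hc
  push_neg at hc
  apply h
  intro x y
  exact rch_reachable (hc x.1 y.1 x.2 y.2) x.2 y.2

lemma cut_intro {G : SimpleGraph V} {S : Set V} {u v : V} (hu : u ∉ S) (hv : v ∉ S)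
    (h : ¬ Rch G S u v) : IsVertexCut G S := by
  intro hpre
  exact h ((hpre ⟨u, hu⟩ ⟨v, hv⟩).elim fun w => walk_rch w)

lemma not_cut_rch {G : SimpleGraph V} {S : Set V} (h : ¬ IsVertexCut G S) {u v : V}
    (hu : u ∉ S) (hv : v ∉ S) : Rch G S u v := by
  have hp : (G.induce Sᶜ).Preconnected := not_not.mp h
  exact (hp ⟨u, hu⟩ ⟨v, hv⟩).elim fun w => walk_rch w

lemma rch_avoid {G : SimpleGraph V} {S Z : Set V} {u v : V}
    (hsub : ∀ t, Rch G S u t → t ∉ Z) (h : Rch G S u v) : Rch G Z u v := by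
  induction h with
  | refl => exact rch_refl
  | @tail b c hb step ih =>
      exact ih.tail ⟨hsub _ hb, hsub _ (hb.tail step), step.2.2⟩

lemma rch_map {G : SimpleGraph V} {G' : SimpleGraph V'} (e : G ≃g G') {S : Set V} {u v : V}
    (h : Rch G S u v) : Rch G' ((e : V → V') '' S) (e u) (e v) := by
  induction h with
  | refl => exact rch_refl
  | @tail b c _ step ih =>
      refine ih.tail ⟨?_, ?_, e.map_adj_iff.mpr step.2.2⟩
      · rintro ⟨x, hx, hxe⟩
        exact step.1 (e.toEquiv.injective hxe ▸ hx)
      · rintro ⟨x, hx, hxe⟩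
        exact step.2.1 (e.toEquiv.injective hxe ▸ hx)

end KAux
namespace KAux

open Finset

set_option linter.unusedSectionVars false

variable {V : Type} [Fintype V] [DecidableEq V] {G : SimpleGraph V} {k : ℕ}

/-- Full neighborhood lemma: if `|S| = k` and `u, w` are separated by `S` in a
`k`-connected graph, then every `s ∈ S` has a neighbor in the component of `u`. -/
lemma FN (H1 : KConnected G k) {S : Finset V} (hcard : S.card = k) {u w : V}
    (hu : u ∉ S) (hw : w ∉ S) (hnr : ¬ Rch G ↑S u w) {s : V} (hs : s ∈ S) :
    ∃ c, Rch G ↑S u c ∧ G.Adj c s := by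
  classical
  by_contra hno
  push_neg at hno
  set T : Finset V := S.filter (fun t => ∃ c, Rch G ↑S u c ∧ G.Adj c t) with hTdef
  have hTS : T ⊆ S := filter_subset _ _
  have hsT : s ∉ T := by
    intro hsT
    obtain ⟨c, hc1, hc2⟩ := (mem_filter.mp hsT).2
    exact hno c hc1 hc2
  have hTcard : T.card < k := by
    have : T ⊂ S := ⟨hTS, fun hST => hsT (hST hs)⟩
    calc T.card < S.card := Finset.card_lt_card this
    _ = k := hcard
  have hpre := H1.2 T hTcard
  have hrT : Rch G ↑T u w := not_cut_rch hpre
      (fun hmem => hu (hTS (by exact_mod_cast hmem)))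
      (fun hmem => hw (hTS (by exact_mod_cast hmem)))
  have key : ∀ y, Rch G ↑T u y → Rch G ↑S u y := by
    intro y hy
    induction hy with
    | refl => exact rch_refl
    | @tail b c _ step ih =>
        by_cases hcS : c ∈ S
        · exfalso
          have hcT : c ∈ T := mem_filter.mpr ⟨hcS, ⟨b, ih, step.2.2⟩⟩
          exact step.2.1 (by exact_mod_cast hcT)
        · exact ih.tail ⟨rch_not_mem (by exact_mod_cast hu) ih, by exact_mod_cast hcS, step.2.2⟩
  exact hnr (key w hrT)

/-- Minimum degree at least `k`, in Finset form. -/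
lemma mindeg (H1 : KConnected G k) (v : V) :
    k ≤ ((Set.toFinite (G.neighborSet v)).toFinset).card := by
  classical
  set N : Finset V := (Set.toFinite (G.neighborSet v)).toFinset with hNdef
  have hmemN : ∀ y, y ∈ N ↔ G.Adj v y := by
    intro y; simp [hNdef, Set.Finite.mem_toFinset, SimpleGraph.mem_neighborSet]
  by_contra hlt
  push_neg at hlt
  have hnc := H1.2 N hlt
  have hvN : v ∉ N := by rw [hmemN]; exact G.irrefl
  obtain ⟨w, hw⟩ : ∃ w, w ∉ insert v N := by
    by_contra hall
    push_neg at hall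
    have hsub : Finset.univ ⊆ insert v N := fun x _ => hall x
    have h1 : Fintype.card V ≤ (insert v N).card := by
      calc Fintype.card V = Finset.univ.card := (Finset.card_univ).symm
      _ ≤ (insert v N).card := Finset.card_le_card hsub
    have h2 : (insert v N).card ≤ N.card + 1 := Finset.card_insert_le _ _
    have := H1.1
    omega
  have hwv : w ≠ v := fun h => hw (h ▸ Finset.mem_insert_self _ _)
  have hwN : w ∉ N := fun h => hw (Finset.mem_insert_of_mem h)
  have hr : Rch G ↑N v w := not_cut_rch hnc (by exact_mod_cast hvN) (by exact_mod_cast hwN)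
  rcases rch_cases_head hr with heq | ⟨c, hc, -⟩
  · exact hwv heq.symm
  · exact hc.2.1 (by exact_mod_cast (hmemN c).mpr hc.2.2)

variable (G) in
/-- `v` is on the far side of the cut `A \ {a}` from `a`. -/
def Off (A : Finset V) (a v : V) : Prop :=
  v ∉ A.erase a ∧ ¬ Rch G ↑(A.erase a) a v

lemma erase_card {A : Finset V} (hAc : A.card = k + 1) {a : V} (ha : a ∈ A) :
    (A.erase a).card = k := by
  rw [Finset.card_erase_of_mem ha, hAc]
  omega

lemma erase_indep {A : Finset V} (hA : IsIndep G ↑A) {a : V} : IsIndep G ↑(A.erase a) := by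
  apply Set.Pairwise.mono _ hA
  exact_mod_cast Finset.coe_subset.mpr (Finset.erase_subset _ _)

lemma off_exists {A : Finset V}
    (H3 : ∀ S : Finset V, IsIndep G ↑S → S.card = k → IsVertexCut G ↑S)
    (hA : IsIndep G ↑A) (hAc : A.card = k + 1) {a : V} (ha : a ∈ A) : ∃ v, Off G A a v := by
  have hcut := H3 (A.erase a) (erase_indep hA) (erase_card hAc ha)
  obtain ⟨u, w, hu, hw, hnr⟩ := cut_elim hcut
  rw [Finset.mem_coe] at hu hw
  by_cases h : Rch G ↑(A.erase a) a u
  · by_cases h' : Rch G ↑(A.erase a) a w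
    · exact absurd ((rch_symm h).trans h') hnr
    · exact ⟨w, hw, h'⟩
  · exact ⟨u, hu, h⟩

lemma off_not_mem_A {A : Finset V} {a v : V} (h : Off G A a v) : v ∉ A := by
  intro hvA
  by_cases hva : v = a
  · exact h.2 (hva ▸ rch_refl)
  · exact h.1 (Finset.mem_erase.mpr ⟨hva, hvA⟩)

lemma class_not_A {A : Finset V} {a v y : V} (hv : Off G A a v)
    (h : Rch G ↑(A.erase a) v y) : y ∉ A := by
  intro hyA
  by_cases hya : y = a
  · exact hv.2 (rch_symm (hya ▸ h))
  · exact (rch_not_mem (by exact_mod_cast hv.1) h)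
      (by exact_mod_cast Finset.mem_erase.mpr ⟨hya, hyA⟩)

/-- The component of an off-vertex of `a` is inside the component of `a'` for `a' ≠ a`. -/
lemma cross_comp {A : Finset V} (H1 : KConnected G k) (hAc : A.card = k + 1)
    {a a' v y : V} (ha : a ∈ A) (ha' : a' ∈ A) (hne : a' ≠ a)
    (hv : Off G A a v) (hy : Rch G ↑(A.erase a) v y) : Rch G ↑(A.erase a') a' y := by
  have hva : a ∉ A.erase a := Finset.notMem_erase _ _
  obtain ⟨c, hc1, hc2⟩ := FN H1 (erase_card hAc ha) (by exact_mod_cast hv.1)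
    (by exact_mod_cast hva) (fun hr => hv.2 (rch_symm hr))
    (Finset.mem_erase.mpr ⟨hne, ha'⟩)
  have hyc : Rch G ↑(A.erase a) y c := (rch_symm hy).trans hc1
  have hsub : ∀ t, Rch G ↑(A.erase a) y t → t ∉ (↑(A.erase a') : Set V) := by
    intro t ht
    have hvt : Rch G ↑(A.erase a) v t := hy.trans ht
    have htA : t ∉ A := class_not_A hv hvt
    exact fun hmem => htA (Finset.mem_of_mem_erase (by exact_mod_cast hmem))
  have hyc' : Rch G ↑(A.erase a') y c := rch_avoid hsub hyc
  have hstep : Rch G ↑(A.erase a') c a' := by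
    refine rch_single (hsub c hyc) ?_ hc2
    exact_mod_cast Finset.notMem_erase _ _
  exact rch_symm (hyc'.trans hstep)

lemma cross_disj {A : Finset V} (H1 : KConnected G k) (hAc : A.card = k + 1)
    {a a' v v' y : V} (ha : a ∈ A) (ha' : a' ∈ A) (hne : a ≠ a')
    (hv : Off G A a v) (hv' : Off G A a' v')
    (hy : Rch G ↑(A.erase a) v y) (hy' : Rch G ↑(A.erase a') v' y) : False := by
  have h1 : Rch G ↑(A.erase a') a' y := cross_comp H1 hAc ha ha' (Ne.symm hne) hv hy
  exact hv'.2 (h1.trans (rch_symm hy'))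

lemma off_ne {A : Finset V} (H1 : KConnected G k) (hAc : A.card = k + 1)
    {a a' v v' : V} (ha : a ∈ A) (ha' : a' ∈ A) (hne : a ≠ a')
    (hv : Off G A a v) (hv' : Off G A a' v') : v ≠ v' := by
  intro h
  exact cross_disj H1 hAc ha ha' hne hv hv' rch_refl (h ▸ rch_refl)

lemma off_not_adj {A : Finset V} (H1 : KConnected G k) (hAc : A.card = k + 1)
    {a a' v v' : V} (ha : a ∈ A) (ha' : a' ∈ A) (hne : a ≠ a')
    (hv : Off G A a v) (hv' : Off G A a' v') : ¬ G.Adj v v' := by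
  intro hadj
  have hv'A : v' ∉ A := off_not_mem_A hv'
  have hstep : Rch G ↑(A.erase a) v v' := by
    refine rch_single (by exact_mod_cast hv.1) ?_ hadj
    intro hmem
    exact hv'A (Finset.mem_of_mem_erase (by exact_mod_cast hmem))
  exact cross_disj H1 hAc ha ha' hne hv hv' hstep rch_refl

end KAux
namespace KAux

open Finset

variable {V : Type} [Fintype V] [DecidableEq V] {G : SimpleGraph V} {k : ℕ}

/-- The main structural lemma: the neighborhood of `aj` consists exactly of one chosen
off-vertex for each other element of `A`. -/
lemma main_nbhd (hk : 3 ≤ k) (H1 : KConnected G k)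
    (H3 : ∀ S : Finset V, IsIndep G ↑S → S.card = k → IsVertexCut G ↑S)
    {A : Finset V} (hA : IsIndep G ↑A) (hAc : A.card = k + 1)
    {aj : V} (haj : aj ∈ A) (σ : V → V) (hσ : ∀ a ∈ A.erase aj, Off G A a (σ a)) :
    ∀ y, G.Adj aj y ↔ y ∈ (A.erase aj).image σ := by
  classical
  set Z : Finset V := (A.erase aj).image σ with hZdef
  have hZA : ∀ x ∈ A, x ∉ Z := by
    intro x hx hxZ
    obtain ⟨a, ha, rfl⟩ := mem_image.mp hxZ
    exact off_not_mem_A (hσ a ha) hx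
  have hZcard : Z.card = k := by
    rw [hZdef, Finset.card_image_of_injOn, erase_card hAc haj]
    intro a ha a' ha' heq
    by_contra hne
    exact off_ne H1 hAc (mem_of_mem_erase ha) (mem_of_mem_erase ha') hne
      (hσ a ha) (hσ a' ha') heq
  have hZind : IsIndep G ↑Z := by
    intro x hx y hy hxy
    obtain ⟨a, ha, rfl⟩ := mem_image.mp (by exact_mod_cast hx)
    obtain ⟨a', ha', rfl⟩ := mem_image.mp (by exact_mod_cast hy)
    have hne : a ≠ a' := fun h => hxy (by rw [h])
    exact off_not_adj H1 hAc (mem_of_mem_erase ha) (mem_of_mem_erase ha') hne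
      (hσ a ha) (hσ a' ha')
  have hcut : IsVertexCut G ↑Z := H3 Z hZind hZcard
  have hajE : aj ∉ A.erase aj := Finset.notMem_erase _ _
  obtain ⟨a1, ha1⟩ : (A.erase aj).Nonempty := by
    rw [← Finset.card_pos, erase_card hAc haj]; omega
  have ha1A : a1 ∈ A := mem_of_mem_erase ha1
  have ha1j : a1 ≠ aj := (Finset.mem_erase.mp ha1).1
  -- a point of the component of an off-vertex can be in Z only at its own base
  have keyZ : ∀ a₀ ∈ A, ∀ c, Off G A a₀ c → ∀ t, Rch G ↑(A.erase a₀) c t → t ∈ Z →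
      a₀ ∈ A.erase aj ∧ t = σ a₀ := by
    intro a₀ ha₀ c hc t hrt htZ
    obtain ⟨a'', ha'', heq⟩ := mem_image.mp htZ
    by_cases hne : a'' = a₀
    · exact ⟨hne ▸ ha'', heq ▸ (by rw [hne])⟩
    · exfalso
      refine cross_disj H1 hAc ha₀ (mem_of_mem_erase ha'') (Ne.symm hne) hc (hσ a'' ha'')
        hrt ?_
      rw [heq]
      exact rch_refl
  -- all vertices of `A` other than `aj` are mutually connected in `G - Z`
  have B1 : ∀ a ∈ A, a ≠ aj → ∀ a' ∈ A, a' ≠ aj → Rch G ↑Z a a' := by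
    intro a ha hanej a' ha' ha'nej
    obtain ⟨y0, hy0⟩ := off_exists H3 hA hAc haj
    have hnr0 : ¬ Rch G ↑(A.erase aj) y0 aj := fun h => hy0.2 (rch_symm h)
    obtain ⟨c, hc1, hc2⟩ := FN H1 (erase_card hAc haj) (by exact_mod_cast hy0.1)
      (by exact_mod_cast hajE) hnr0 (Finset.mem_erase.mpr ⟨hanej, ha⟩)
    obtain ⟨c', hc1', hc2'⟩ := FN H1 (erase_card hAc haj) (by exact_mod_cast hy0.1)
      (by exact_mod_cast hajE) hnr0 (Finset.mem_erase.mpr ⟨ha'nej, ha'⟩)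
    have hsub : ∀ t, Rch G ↑(A.erase aj) c t → t ∉ (↑Z : Set V) := by
      intro t ht htZ
      exact hajE (keyZ aj haj y0 hy0 t (hc1.trans ht) (by exact_mod_cast htZ)).1
    have hcc' : Rch G ↑Z c c' := rch_avoid hsub ((rch_symm hc1).trans hc1')
    have s1 : Stp G ↑Z a c := ⟨by exact_mod_cast hZA a ha, hsub c rch_refl, hc2.symm⟩
    have s2 : Stp G ↑Z c' a' := by
      refine ⟨?_, by exact_mod_cast hZA a' ha', hc2'⟩
      have : Rch G ↑(A.erase aj) c c' := (rch_symm hc1).trans hc1'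
      exact hsub c' this
    exact Relation.ReflTransGen.head s1 (hcc'.tail s2)
  -- exit lemma : from any off-vertex outside Z one can reach some `a' ≠ aj` in `G - Z`
  have EXIT : ∀ a₀ ∈ A, ∀ c, Off G A a₀ c → c ∉ Z →
      ∃ a', a' ∈ A ∧ a' ≠ aj ∧ Rch G ↑Z c a' := by
    intro a₀ ha₀ c hc hcZ
    set b₀ : V := if a₀ = aj then a1 else a₀ with hb₀def
    have hb₀ : b₀ ∈ A.erase aj := by
      rw [hb₀def]
      split
      · exact ha1
      · next hne => exact Finset.mem_erase.mpr ⟨hne, ha₀⟩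
    set z₀ : V := σ b₀ with hz₀def
    have hz₀Z : z₀ ∈ Z := mem_image_of_mem σ hb₀
    have hz₀A : z₀ ∉ A := off_not_mem_A (hσ b₀ hb₀)
    have hclassZ : ∀ t, Rch G ↑(A.erase a₀) c t → t ∈ Z → t = z₀ := by
      intro t hrt htZ
      obtain ⟨h1, h2⟩ := keyZ a₀ ha₀ c hc t hrt htZ
      have : a₀ ≠ aj := (Finset.mem_erase.mp h1).1
      rw [h2, hz₀def, hb₀def, if_neg this]
    set T : Finset V := {z₀, aj} with hTdef
    have hTcard : T.card < k := by
      calc T.card ≤ 2 := by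
            rw [hTdef]
            exact (Finset.card_insert_le _ _).trans (by simp)
      _ < k := by omega
    have hcT : c ∉ T := by
      rw [hTdef]
      simp only [Finset.mem_insert, Finset.mem_singleton]
      push_neg
      exact ⟨fun h => hcZ (h ▸ hz₀Z), fun h => off_not_mem_A hc (h ▸ haj)⟩
    have ha1T : a1 ∉ T := by
      rw [hTdef]
      simp only [Finset.mem_insert, Finset.mem_singleton]
      push_neg
      exact ⟨fun h => hz₀A (h ▸ ha1A), ha1j⟩
    have hrT : Rch G ↑T c a1 :=
      not_cut_rch (H1.2 T hTcard) (by exact_mod_cast hcT) (by exact_mod_cast ha1T)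
    have hajT : aj ∈ T := by rw [hTdef]; simp
    have hz₀T : z₀ ∈ T := by rw [hTdef]; simp
    have inv : ∀ y, Rch G ↑T c y →
        ((Rch G ↑(A.erase a₀) c y ∧ Rch G ↑Z c y) ∨
          ∃ a', a' ∈ A ∧ a' ≠ aj ∧ Rch G ↑Z c a') := by
      intro y hy
      induction hy with
      | refl => exact Or.inl ⟨rch_refl, rch_refl⟩
      | @tail b d hb step ih =>
          rcases ih with ⟨hSb, hZb⟩ | hdone
          · have hbZ : b ∉ Z := by
              intro hbZ'
              exact step.1 (by exact_mod_cast (hclassZ b hSb hbZ') ▸ hz₀T)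
            by_cases hdS : d ∈ A.erase a₀
            · refine Or.inr ⟨d, mem_of_mem_erase hdS, ?_, ?_⟩
              · intro h
                exact step.2.1 (by exact_mod_cast h ▸ hajT)
              · refine hZb.tail ⟨by exact_mod_cast hbZ, ?_, step.2.2⟩
                exact_mod_cast hZA d (mem_of_mem_erase hdS)
            · have hbS : b ∉ A.erase a₀ := rch_not_mem (by exact_mod_cast hc.1) hSb
              have hS' : Rch G ↑(A.erase a₀) c d :=
                hSb.tail ⟨by exact_mod_cast hbS, by exact_mod_cast hdS, step.2.2⟩
              have hdZ : d ∉ Z := by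
                intro hdZ'
                exact step.2.1 (by exact_mod_cast (hclassZ d hS' hdZ') ▸ hz₀T)
              exact Or.inl ⟨hS', hZb.tail ⟨by exact_mod_cast hbZ, by exact_mod_cast hdZ,
                step.2.2⟩⟩
          · exact Or.inr hdone
    rcases inv a1 hrT with ⟨hS, _⟩ | hdone
    · exact absurd ha1A (class_not_A hc hS)
    · exact hdone
  -- everything except `aj` can reach `a1` in `G - Z`
  have E1 : ∀ u, u ∉ Z → u ≠ aj → Rch G ↑Z u a1 := by
    intro u huZ hune
    by_cases huA : u ∈ A
    · exact B1 u huA hune a1 ha1A ha1j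
    · by_cases hoff : ∃ a₀ ∈ A, Off G A a₀ u
      · obtain ⟨a₀, ha₀, hOu⟩ := hoff
        obtain ⟨a', ha', hanej, hru⟩ := EXIT a₀ ha₀ u hOu huZ
        exact hru.trans (B1 a' ha' hanej a1 ha1A ha1j)
      · push_neg at hoff
        by_contra hnr
        have hZoff : ∀ t ∈ Z, ∃ a'' ∈ A, Off G A a'' t := by
          intro t htZ
          obtain ⟨a'', ha'', rfl⟩ := mem_image.mp htZ
          exact ⟨a'', mem_of_mem_erase ha'', hσ a'' ha''⟩
        have inv2 : ∀ y, Rch G ↑({aj} : Finset V) u y →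
            (Rch G ↑Z u y ∧ y ∉ A ∧ ∀ a₀ ∈ A, ¬ Off G A a₀ y) := by
          intro y hy
          induction hy with
          | refl => exact ⟨rch_refl, huA, hoff⟩
          | @tail b d hb step ih =>
              obtain ⟨hZb, hbA, hbR⟩ := ih
              have hbZ : b ∉ Z := by
                intro hbZ'
                obtain ⟨a'', ha'', hO⟩ := hZoff b hbZ'
                exact hbR a'' ha'' hO
              have hdj : d ≠ aj := by
                intro h
                exact step.2.1 (by rw [h]; exact_mod_cast Finset.mem_singleton_self aj)
              by_cases hdA : d ∈ A
              · exfalso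
                have hrd : Rch G ↑Z u d :=
                  hZb.tail ⟨by exact_mod_cast hbZ, by exact_mod_cast hZA d hdA, step.2.2⟩
                exact hnr (hrd.trans (B1 d hdA hdj a1 ha1A ha1j))
              · have noOffd : ∀ a₀ ∈ A, ¬ Off G A a₀ d := by
                  intro a₀ ha₀ hOd
                  apply hbR a₀ ha₀
                  have hstep : Rch G ↑(A.erase a₀) d b := by
                    refine rch_single ?_ ?_ step.2.2.symm
                    · intro h
                      exact hdA (mem_of_mem_erase (by exact_mod_cast h))
                    · intro h
                      exact hbA (mem_of_mem_erase (by exact_mod_cast h))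
                  refine ⟨?_, ?_⟩
                  · intro h
                    exact hbA (mem_of_mem_erase h)
                  · intro h
                    exact hOd.2 (h.trans (rch_symm hstep))
                have hdZ : d ∉ Z := by
                  intro hdZ'
                  obtain ⟨a'', ha'', hO⟩ := hZoff d hdZ'
                  exact noOffd a'' ha'' hO
                exact ⟨hZb.tail ⟨by exact_mod_cast hbZ, by exact_mod_cast hdZ, step.2.2⟩,
                  hdA, noOffd⟩
        have h1card : ({aj} : Finset V).card < k := by simp; omega
        have hr : Rch G ↑({aj} : Finset V) u a1 := by
          refine not_cut_rch (H1.2 {aj} h1card) ?_ ?_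
          · intro h
            exact huA (by exact_mod_cast (Finset.mem_singleton.mp (by exact_mod_cast h)) ▸ haj)
          · intro h
            exact ha1j (by exact_mod_cast Finset.mem_singleton.mp (by exact_mod_cast h))
        exact (inv2 a1 hr).2.1 ha1A
  -- endgame
  obtain ⟨p, q, hp, hq, hnpq⟩ := cut_elim hcut
  rw [Finset.mem_coe] at hp hq
  have hpq : p ≠ q := fun h => hnpq (h ▸ rch_refl)
  have hstar : ¬ Rch G ↑Z aj a1 := by
    by_cases hpj : p = aj
    · subst hpj
      have hqj : q ≠ p := fun h => hpq h.symm
      intro h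
      exact hnpq (h.trans (rch_symm (E1 q hq hqj)))
    · by_cases hqj : q = aj
      · subst hqj
        intro h
        exact hnpq ((E1 p hp hpj).trans (rch_symm h))
      · exact absurd ((E1 p hp hpj).trans (rch_symm (E1 q hq hqj))) hnpq
  have hsubN : ∀ y, G.Adj aj y → y ∈ Z := by
    intro y hadj
    by_contra hyZ
    have hyj : y ≠ aj := fun h => G.irrefl (h ▸ hadj)
    have h0 : Rch G ↑Z aj y :=
      rch_single (by exact_mod_cast hZA aj haj) (by exact_mod_cast hyZ) hadj
    exact hstar (h0.trans (E1 y hyZ hyj))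
  set N : Finset V := (Set.toFinite (G.neighborSet aj)).toFinset with hNdef
  have hmemN : ∀ y, y ∈ N ↔ G.Adj aj y := by
    intro y; simp [hNdef, Set.Finite.mem_toFinset, SimpleGraph.mem_neighborSet]
  have hNsub : N ⊆ Z := fun y hy => hsubN y ((hmemN y).mp hy)
  have hNZ : N = Z := Finset.eq_of_subset_of_card_le hNsub (by rw [hZcard]; exact mindeg H1 aj)
  intro y
  rw [← hmemN y, hNZ]
end KAux
namespace KAux

open Finset

@[simp] lemma kss_adj_inl_inr {s : ℕ} {i j : Fin s} :
    (KssMinusPM s).Adj (Sum.inl i) (Sum.inr j) ↔ i ≠ j := by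
  constructor
  · rintro (⟨a, b, hab, h1, h2⟩ | ⟨a, b, hab, h1, h2⟩) <;> simp_all
  · intro h
    exact Or.inl ⟨i, j, h, rfl, rfl⟩

@[simp] lemma kss_adj_inr_inl {s : ℕ} {i j : Fin s} :
    (KssMinusPM s).Adj (Sum.inr i) (Sum.inl j) ↔ i ≠ j := by
  constructor
  · rintro (⟨a, b, hab, h1, h2⟩ | ⟨a, b, hab, h1, h2⟩) <;> simp_all
  · intro h
    exact Or.inr ⟨i, j, h, rfl, rfl⟩

@[simp] lemma kss_adj_inl_inl {s : ℕ} {i j : Fin s} :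
    ¬ (KssMinusPM s).Adj (Sum.inl i) (Sum.inl j) := by
  rintro (⟨a, b, hab, h1, h2⟩ | ⟨a, b, hab, h1, h2⟩) <;> simp_all

@[simp] lemma kss_adj_inr_inr {s : ℕ} {i j : Fin s} :
    ¬ (KssMinusPM s).Adj (Sum.inr i) (Sum.inr j) := by
  rintro (⟨a, b, hab, h1, h2⟩ | ⟨a, b, hab, h1, h2⟩) <;> simp_all

variable {V : Type} [Fintype V] {G : SimpleGraph V} {k : ℕ}

lemma forward (hk : 3 ≤ k) (H1 : KConnected G k)
    (H3 : ∀ S : Finset V, IsIndep G ↑S → S.card = k → IsVertexCut G ↑S)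
    (A : Finset V) (hA : IsIndep G ↑A) (hAc : A.card = k + 1) :
    Nonempty (G ≃g KssMinusPM (k + 1)) := by
  classical
  -- choose off-vertices
  set β : V → V := fun a => if h : a ∈ A then Classical.choose (off_exists H3 hA hAc h) else a
    with hβdef
  have hβ : ∀ a ∈ A, Off G A a (β a) := by
    intro a ha
    rw [hβdef]
    simp only [dif_pos ha]
    exact Classical.choose_spec (off_exists H3 hA hAc ha)
  have hNa : ∀ a ∈ A, ∀ y, G.Adj a y ↔ y ∈ (A.erase a).image β := by
    intro a ha
    exact main_nbhd hk H1 H3 hA hAc ha β (fun a' ha' => hβ a' (mem_of_mem_erase ha'))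
  have hAne : A.Nonempty := by rw [← Finset.card_pos, hAc]; omega
  obtain ⟨a1, ha1A⟩ := hAne
  -- uniqueness of off-vertices
  have huniq : ∀ a ∈ A, ∀ x, Off G A a x → x = β a := by
    intro a ha x hx
    obtain ⟨aj, hajE⟩ : (A.erase a).Nonempty := by
      rw [← Finset.card_pos, erase_card hAc ha]; omega
    have haj : aj ∈ A := mem_of_mem_erase hajE
    have hajne : aj ≠ a := (Finset.mem_erase.mp hajE).1
    set σ' : V → V := Function.update β a x with hσ'def
    have hσ' : ∀ a' ∈ A.erase aj, Off G A a' (σ' a') := by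
      intro a' ha'
      by_cases h : a' = a
      · subst h
        rw [hσ'def, Function.update_self]
        exact hx
      · rw [hσ'def, Function.update_of_ne h]
        exact hβ a' (mem_of_mem_erase ha')
    have h1 := main_nbhd hk H1 H3 hA hAc haj σ' hσ'
    have h2 := main_nbhd hk H1 H3 hA hAc haj β (fun a' ha' => hβ a' (mem_of_mem_erase ha'))
    have hxmem : x ∈ (A.erase aj).image σ' := by
      refine mem_image.mpr ⟨a, Finset.mem_erase.mpr ⟨Ne.symm hajne, ha⟩, ?_⟩
      rw [hσ'def, Function.update_self]
    have hadj : G.Adj aj x := (h1 x).mpr hxmem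
    obtain ⟨a'', ha'', heq⟩ := mem_image.mp ((h2 x).mp hadj)
    by_cases hne : a'' = a
    · rw [← heq, hne]
    · exfalso
      exact off_ne H1 hAc (mem_of_mem_erase ha'') ha hne (hβ a'' (mem_of_mem_erase ha'')) hx heq
  have hNb : ∀ a ∈ A, ∀ y, G.Adj (β a) y ↔ y ∈ A.erase a := by
    intro a ha y
    constructor
    · intro hadj
      by_cases hyS : y ∈ A.erase a
      · exact hyS
      · exfalso
        have hrch : Rch G ↑(A.erase a) (β a) y :=
          rch_single (by exact_mod_cast (hβ a ha).1) (by exact_mod_cast hyS) hadj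
        have hOy : Off G A a y := by
          refine ⟨hyS, fun h => (hβ a ha).2 (h.trans (rch_symm hrch))⟩
        have := huniq a ha y hOy
        subst this
        exact G.irrefl hadj
    · intro hyS
      have hnr : ¬ Rch G ↑(A.erase a) (β a) a := fun h => (hβ a ha).2 (rch_symm h)
      obtain ⟨c, hc1, hc2⟩ := FN H1 (erase_card hAc ha) (by exact_mod_cast (hβ a ha).1)
        (by exact_mod_cast Finset.notMem_erase a A) hnr hyS
      have hOc : Off G A a c := by
        refine ⟨rch_not_mem (by exact_mod_cast (hβ a ha).1) hc1, ?_⟩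
        intro h
        exact (hβ a ha).2 (h.trans (rch_symm hc1))
      have := huniq a ha c hOc
      subst this
      exact hc2
  have hβA : ∀ a ∈ A, β a ∉ A := fun a ha => off_not_mem_A (hβ a ha)
  have hinj : ∀ a ∈ A, ∀ a' ∈ A, β a = β a' → a = a' := by
    intro a ha a' ha' h
    by_contra hne
    exact off_ne H1 hAc ha ha' hne (hβ a ha) (hβ a' ha') h
  -- every vertex is in A or is an off-vertex
  have hcover : ∀ v, v ∈ A ∨ ∃ a ∈ A, β a = v := by
    intro v
    by_cases hvA : v ∈ A
    · exact Or.inl hvA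
    · right
      by_contra hno
      push_neg at hno
      have hnooff : ∀ a ∈ A, ¬ Off G A a v := by
        intro a ha h
        exact hno a ha (huniq a ha v h).symm
      have hr : Rch G (↑(∅ : Finset V)) v a1 := by
        refine not_cut_rch (H1.2 ∅ (by simp; omega)) (by simp) (by simp)
      have inv : ∀ y, Rch G (↑(∅ : Finset V)) v y → (y ∉ A ∧ ∀ a ∈ A, ¬ Off G A a y) := by
        intro y hy
        induction hy with
        | refl => exact ⟨hvA, hnooff⟩
        | @tail b d hb step ih =>
            obtain ⟨hbA, hbR⟩ := ih
            by_cases hdA : d ∈ A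
            · exfalso
              obtain ⟨a'', ha'', heq⟩ := mem_image.mp ((hNa d hdA b).mp step.2.2.symm)
              refine hbR a'' (mem_of_mem_erase ha'') ?_
              rw [← heq]
              exact hβ a'' (mem_of_mem_erase ha'')
            · refine ⟨hdA, ?_⟩
              intro a ha hOd
              apply hbR a ha
              have hstep : Rch G ↑(A.erase a) d b := by
                refine rch_single ?_ ?_ step.2.2.symm
                · intro h
                  exact hdA (mem_of_mem_erase (by exact_mod_cast h))
                · intro h
                  exact hbA (mem_of_mem_erase (by exact_mod_cast h))
              exact ⟨fun h => hbA (mem_of_mem_erase h),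
                fun h => hOd.2 (h.trans (rch_symm hstep))⟩
      exact (inv a1 hr).1 ha1A
  -- build the isomorphism
  have hcard : Fintype.card ↥A = k + 1 := by rw [Fintype.card_coe]; exact hAc
  set eA : ↥A ≃ Fin (k + 1) := Fintype.equivFinOfCardEq hcard with heAdef
  set g : Fin (k + 1) ⊕ Fin (k + 1) → V :=
    Sum.elim (fun i => ((eA.symm i : ↥A) : V)) (fun i => β ((eA.symm i : ↥A) : V)) with hgdef
  have hginj : Function.Injective g := by
    rintro (i | i) (j | j) h
    · simp only [hgdef, Sum.elim_inl] at h
      rw [eA.symm.injective (Subtype.coe_injective h)]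
    · exfalso
      simp only [hgdef, Sum.elim_inl, Sum.elim_inr] at h
      exact hβA _ (eA.symm j).2 (h ▸ (eA.symm i).2)
    · exfalso
      simp only [hgdef, Sum.elim_inl, Sum.elim_inr] at h
      exact hβA _ (eA.symm i).2 (h ▸ (eA.symm j).2)
    · simp only [hgdef, Sum.elim_inr] at h
      rw [eA.symm.injective (Subtype.ext (hinj _ (eA.symm i).2 _ (eA.symm j).2 h))]
  have hgsurj : Function.Surjective g := by
    intro v
    rcases hcover v with hvA | ⟨a, ha, rfl⟩
    · exact ⟨Sum.inl (eA ⟨v, hvA⟩), by simp [hgdef]⟩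
    · exact ⟨Sum.inr (eA ⟨a, ha⟩), by simp [hgdef]⟩
  have hAnoadj : ∀ a ∈ A, ∀ a' ∈ A, ¬ G.Adj a a' := by
    intro a ha a' ha' hadj
    by_cases h : a = a'
    · exact G.irrefl (h ▸ hadj)
    · exact hA (by exact_mod_cast ha) (by exact_mod_cast ha') h hadj
  have himg : ∀ a ∈ A, ∀ a' ∈ A, (β a' ∈ (A.erase a).image β ↔ a' ∈ A.erase a) := by
    intro a ha a' ha'
    constructor
    · rintro hmem
      obtain ⟨a'', ha'', heq⟩ := mem_image.mp hmem
      rwa [← hinj a'' (mem_of_mem_erase ha'') a' ha' heq]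
    · exact mem_image_of_mem β
  have hrel : ∀ x y, G.Adj (g x) (g y) ↔ (KssMinusPM (k + 1)).Adj x y := by
    rintro (i | i) (j | j)
    · simp only [hgdef, Sum.elim_inl]
      constructor
      · intro h
        exact absurd h (hAnoadj _ (eA.symm i).2 _ (eA.symm j).2)
      · intro h
        exact absurd h (kss_adj_inl_inl)
    · simp only [hgdef, Sum.elim_inl, Sum.elim_inr, kss_adj_inl_inr]
      rw [hNa _ (eA.symm i).2, himg _ (eA.symm i).2 _ (eA.symm j).2, Finset.mem_erase]
      constructor
      · intro ⟨h, _⟩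
        intro hij
        exact h (by rw [hij])
      · intro h
        refine ⟨?_, (eA.symm j).2⟩
        intro heq
        exact h (eA.symm.injective (Subtype.coe_injective heq)).symm
    · simp only [hgdef, Sum.elim_inl, Sum.elim_inr, kss_adj_inr_inl]
      rw [hNb _ (eA.symm i).2, Finset.mem_erase]
      constructor
      · intro ⟨h, _⟩
        intro hij
        exact h (by rw [hij])
      · intro h
        refine ⟨?_, (eA.symm j).2⟩
        intro heq
        exact h (eA.symm.injective (Subtype.coe_injective heq)).symm
    · simp only [hgdef, Sum.elim_inr]
      constructor
      · intro h
        exact absurd (mem_of_mem_erase ((hNb _ (eA.symm i).2 _).mp h)) (hβA _ (eA.symm j).2)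
      · intro h
        exact absurd h (kss_adj_inr_inr)
  exact ⟨(RelIso.mk (Equiv.ofBijective g ⟨hginj, hgsurj⟩)
    (fun {x y} => hrel x y)).symm⟩

end KAux
namespace KAux

open Finset

section Kss

variable {s : ℕ}

/-- count of removed left plus removed right indices is at most `|S|`. -/
lemma cardLR (S : Finset (Fin s ⊕ Fin s)) :
    (univ.filter (fun i => Sum.inl i ∈ S)).card +
      (univ.filter (fun i => Sum.inr i ∈ S)).card ≤ S.card := by
  classical
  set L' := (univ.filter (fun i : Fin s => Sum.inl i ∈ S)).image (Sum.inl : Fin s → Fin s ⊕ Fin s) with hL'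
  set R' := (univ.filter (fun i : Fin s => Sum.inr i ∈ S)).image (Sum.inr : Fin s → Fin s ⊕ Fin s) with hR'
  have hsub : L' ∪ R' ⊆ S := by
    intro x hx
    rcases Finset.mem_union.mp hx with h | h
    · obtain ⟨i, hi, rfl⟩ := mem_image.mp h
      exact (mem_filter.mp hi).2
    · obtain ⟨i, hi, rfl⟩ := mem_image.mp h
      exact (mem_filter.mp hi).2
  have hdisj : Disjoint L' R' := by
    rw [Finset.disjoint_left]
    rintro x hx hx'
    obtain ⟨i, _, rfl⟩ := mem_image.mp hx
    obtain ⟨i', _, h⟩ := mem_image.mp hx'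
    exact Sum.inl_ne_inr h.symm
  calc (univ.filter (fun i : Fin s => Sum.inl i ∈ S)).card +
      (univ.filter (fun i : Fin s => Sum.inr i ∈ S)).card
      = L'.card + R'.card := by
        rw [hL', hR', Finset.card_image_of_injective _ Sum.inl_injective,
          Finset.card_image_of_injective _ Sum.inr_injective]
    _ = (L' ∪ R').card := (Finset.card_union_of_disjoint hdisj).symm
    _ ≤ S.card := Finset.card_le_card hsub

lemma exL (S : Finset (Fin s ⊕ Fin s)) (J : Finset (Fin s))
    (h : (univ.filter (fun i => Sum.inl i ∈ S)).card + J.card < s) :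
    ∃ i, Sum.inl i ∉ S ∧ i ∉ J := by
  classical
  by_contra hall
  push_neg at hall
  have hsub : (univ : Finset (Fin s)) ⊆ (univ.filter (fun i => Sum.inl i ∈ S)) ∪ J := by
    intro i _
    by_cases hi : Sum.inl i ∈ S
    · exact Finset.mem_union_left _ (mem_filter.mpr ⟨mem_univ i, hi⟩)
    · exact Finset.mem_union_right _ (hall i hi)
  have h1 := Finset.card_le_card hsub
  rw [Finset.card_univ, Fintype.card_fin] at h1
  have h2 := Finset.card_union_le (univ.filter (fun i : Fin s => Sum.inl i ∈ S)) J
  omega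

lemma exR (S : Finset (Fin s ⊕ Fin s)) (J : Finset (Fin s))
    (h : (univ.filter (fun i => Sum.inr i ∈ S)).card + J.card < s) :
    ∃ i, Sum.inr i ∉ S ∧ i ∉ J := by
  classical
  by_contra hall
  push_neg at hall
  have hsub : (univ : Finset (Fin s)) ⊆ (univ.filter (fun i => Sum.inr i ∈ S)) ∪ J := by
    intro i _
    by_cases hi : Sum.inr i ∈ S
    · exact Finset.mem_union_left _ (mem_filter.mpr ⟨mem_univ i, hi⟩)
    · exact Finset.mem_union_right _ (hall i hi)
  have h1 := Finset.card_le_card hsub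
  rw [Finset.card_univ, Fintype.card_fin] at h1
  have h2 := Finset.card_union_le (univ.filter (fun i : Fin s => Sum.inr i ∈ S)) J
  omega

lemma kss_core_l (S : Finset (Fin s ⊕ Fin s))
    (hL : (univ.filter (fun i => Sum.inl i ∈ S)).card + 3 ≤ s)
    (hR : (univ.filter (fun i => Sum.inr i ∈ S)).card + 2 ≤ s) :
    ∀ u v, u ∉ S → v ∉ S → Rch (KssMinusPM s) ↑S u v := by
  classical
  have er : ∀ j j', Sum.inr j ∉ S → Sum.inr j' ∉ S →
      Rch (KssMinusPM s) ↑S (Sum.inr j) (Sum.inr j') := by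
    intro j j' hj hj'
    by_cases hjj : j = j'
    · subst hjj; exact rch_refl
    · obtain ⟨m, hmS, hmJ⟩ := exL S {j, j'} (by
        have : ({j, j'} : Finset (Fin s)).card ≤ 2 :=
          (Finset.card_insert_le _ _).trans (by simp)
        omega)
      have hmj : m ≠ j := fun h => hmJ (by rw [h]; simp)
      have hmj' : m ≠ j' := fun h => hmJ (by rw [h]; simp)
      have s1 : Stp (KssMinusPM s) ↑S (Sum.inr j) (Sum.inl m) :=
        ⟨by exact_mod_cast hj, by exact_mod_cast hmS, kss_adj_inr_inl.mpr (Ne.symm hmj)⟩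
      have s2 : Stp (KssMinusPM s) ↑S (Sum.inl m) (Sum.inr j') :=
        ⟨by exact_mod_cast hmS, by exact_mod_cast hj', kss_adj_inl_inr.mpr hmj'⟩
      exact Relation.ReflTransGen.head s1 (Relation.ReflTransGen.single s2)
  have el : ∀ i, Sum.inl i ∉ S → ∃ j, Sum.inr j ∉ S ∧ i ≠ j := by
    intro i hi
    obtain ⟨j, hjS, hjJ⟩ := exR S {i} (by
      rw [Finset.card_singleton]
      omega)
    exact ⟨j, hjS, fun h => hjJ (by rw [h]; simp)⟩
  rintro (i | j) (i' | j') hu hv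
  · obtain ⟨j, hj, hij⟩ := el i hu
    obtain ⟨j', hj', hij'⟩ := el i' hv
    refine Relation.ReflTransGen.head
      ⟨by exact_mod_cast hu, by exact_mod_cast hj, kss_adj_inl_inr.mpr hij⟩ ?_
    exact (er j j' hj hj').tail
      ⟨by exact_mod_cast hj', by exact_mod_cast hv, kss_adj_inr_inl.mpr (Ne.symm hij')⟩
  · obtain ⟨j1, hj1, hij1⟩ := el i hu
    exact Relation.ReflTransGen.head
      ⟨by exact_mod_cast hu, by exact_mod_cast hj1, kss_adj_inl_inr.mpr hij1⟩
      (er j1 j' hj1 hv)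
  · obtain ⟨j1, hj1, hij1⟩ := el i' hv
    exact (er j j1 hu hj1).tail
      ⟨by exact_mod_cast hj1, by exact_mod_cast hv, kss_adj_inr_inl.mpr (Ne.symm hij1)⟩
  · exact er j j' hu hv

lemma kss_core_r (S : Finset (Fin s ⊕ Fin s))
    (hR : (univ.filter (fun i => Sum.inr i ∈ S)).card + 3 ≤ s)
    (hL : (univ.filter (fun i => Sum.inl i ∈ S)).card + 2 ≤ s) :
    ∀ u v, u ∉ S → v ∉ S → Rch (KssMinusPM s) ↑S u v := by
  classical
  have el2 : ∀ j j', Sum.inl j ∉ S → Sum.inl j' ∉ S →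
      Rch (KssMinusPM s) ↑S (Sum.inl j) (Sum.inl j') := by
    intro j j' hj hj'
    by_cases hjj : j = j'
    · subst hjj; exact rch_refl
    · obtain ⟨m, hmS, hmJ⟩ := exR S {j, j'} (by
        have : ({j, j'} : Finset (Fin s)).card ≤ 2 :=
          (Finset.card_insert_le _ _).trans (by simp)
        omega)
      have hmj : m ≠ j := fun h => hmJ (by rw [h]; simp)
      have hmj' : m ≠ j' := fun h => hmJ (by rw [h]; simp)
      have s1 : Stp (KssMinusPM s) ↑S (Sum.inl j) (Sum.inr m) :=
        ⟨by exact_mod_cast hj, by exact_mod_cast hmS, kss_adj_inl_inr.mpr (Ne.symm hmj)⟩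
      have s2 : Stp (KssMinusPM s) ↑S (Sum.inr m) (Sum.inl j') :=
        ⟨by exact_mod_cast hmS, by exact_mod_cast hj', kss_adj_inr_inl.mpr hmj'⟩
      exact Relation.ReflTransGen.head s1 (Relation.ReflTransGen.single s2)
  have er2 : ∀ i, Sum.inr i ∉ S → ∃ j, Sum.inl j ∉ S ∧ i ≠ j := by
    intro i hi
    obtain ⟨j, hjS, hjJ⟩ := exL S {i} (by
      rw [Finset.card_singleton]
      omega)
    exact ⟨j, hjS, fun h => hjJ (by rw [h]; simp)⟩
  rintro (i | j) (i' | j') hu hv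
  · exact el2 i i' hu hv
  · obtain ⟨j1, hj1, hij1⟩ := er2 j' hv
    exact (el2 i j1 hu hj1).tail
      ⟨by exact_mod_cast hj1, by exact_mod_cast hv, kss_adj_inl_inr.mpr (Ne.symm hij1)⟩
  · obtain ⟨j1, hj1, hij1⟩ := er2 j hu
    exact Relation.ReflTransGen.head
      ⟨by exact_mod_cast hu, by exact_mod_cast hj1, kss_adj_inr_inl.mpr hij1⟩
      (el2 j1 i' hj1 hv)
  · obtain ⟨j1, hj1, hij1⟩ := er2 j hu
    obtain ⟨j1', hj1', hij1'⟩ := er2 j' hv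
    refine Relation.ReflTransGen.head
      ⟨by exact_mod_cast hu, by exact_mod_cast hj1, kss_adj_inr_inl.mpr hij1⟩ ?_
    exact (el2 j1 j1' hj1 hj1').tail
      ⟨by exact_mod_cast hj1', by exact_mod_cast hv, kss_adj_inl_inr.mpr (Ne.symm hij1')⟩

lemma kss_preconn {k : ℕ} (hk : 3 ≤ k) (S : Finset (Fin (k + 1) ⊕ Fin (k + 1)))
    (hS : S.card < k) :
    ∀ u v, u ∉ S → v ∉ S → Rch (KssMinusPM (k + 1)) ↑S u v := by
  classical
  have hlr := cardLR S
  by_cases h : (univ.filter (fun i => Sum.inl i ∈ S)).card + 3 ≤ k + 1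
  · exact kss_core_l S h (by omega)
  · exact kss_core_r S (by omega) (by omega)

lemma kss_cut {k : ℕ} (hk : 3 ≤ k) (S : Finset (Fin (k + 1) ⊕ Fin (k + 1)))
    (hind : IsIndep (KssMinusPM (k + 1)) ↑S) (hc : S.card = k) :
    IsVertexCut (KssMinusPM (k + 1)) ↑S := by
  classical
  have hmix : ∀ {a b : Fin (k + 1)}, Sum.inl a ∈ S → Sum.inr b ∈ S → a = b := by
    intro a b ha hb
    by_contra hne
    exact hind (by exact_mod_cast ha) (by exact_mod_cast hb) (by simp)
      (kss_adj_inl_inr.mpr hne)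
  have hside : (∀ x ∈ S, ∃ i, x = Sum.inl i) ∨ (∀ x ∈ S, ∃ i, x = Sum.inr i) := by
    by_contra h
    push_neg at h
    obtain ⟨⟨x, hx, hxn⟩, ⟨y, hy, hyn⟩⟩ := h
    obtain ⟨b, rfl⟩ : ∃ b, x = Sum.inr b := by
      cases x with
      | inl i => exact absurd rfl (hxn i)
      | inr b => exact ⟨b, rfl⟩
    obtain ⟨a, rfl⟩ : ∃ a, y = Sum.inl a := by
      cases y with
      | inl a => exact ⟨a, rfl⟩
      | inr i => exact absurd rfl (hyn i)
    have hab : a = b := hmix hy hx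
    obtain ⟨w, hwS, hwp⟩ : ∃ w ∈ S, w ∉ ({Sum.inl a, Sum.inr b} :
        Finset (Fin (k + 1) ⊕ Fin (k + 1))) := by
      rw [← Finset.not_subset]
      intro hsub
      have h1 := Finset.card_le_card hsub
      have h2 : ({Sum.inl a, Sum.inr b} : Finset (Fin (k + 1) ⊕ Fin (k + 1))).card ≤ 2 :=
        (Finset.card_insert_le _ _).trans (by simp)
      omega
    cases w with
    | inl c =>
        have : c = b := hmix hwS hx
        exact hwp (by rw [this, ← hab]; simp)
    | inr c =>
        have : a = c := hmix hy hwS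
        exact hwp (by rw [← this, ← hab]; simp)
  rcases hside with hall | hall
  · set T : Finset (Fin (k + 1)) := univ.filter (fun i => Sum.inl i ∈ S) with hTdef
    have himg : S = T.image (Sum.inl : Fin (k+1) → Fin (k+1) ⊕ Fin (k+1)) := by
      ext x
      constructor
      · intro hx
        obtain ⟨i, rfl⟩ := hall x hx
        exact mem_image_of_mem _ (mem_filter.mpr ⟨mem_univ i, hx⟩)
      · intro hx
        obtain ⟨i, hi, rfl⟩ := mem_image.mp hx
        exact (mem_filter.mp hi).2
    have hTc : T.card = k := by
      have := Finset.card_image_of_injective T (Sum.inl_injective : Function.Injective (Sum.inl : Fin (k+1) → Fin (k+1) ⊕ Fin (k+1)))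
      rw [← himg] at this
      omega
    obtain ⟨t₀, ht₀⟩ : ∃ t₀, t₀ ∉ T := by
      by_contra hall'
      push_neg at hall'
      have : T = univ := Finset.eq_univ_iff_forall.mpr hall'
      rw [this, Finset.card_univ, Fintype.card_fin] at hTc
      omega
    have hfull : ∀ j, j ≠ t₀ → Sum.inl j ∈ S := by
      intro j hj
      by_contra hjS
      have hjT : j ∉ T := fun h => hjS (mem_filter.mp h).2
      have h1 : insert t₀ (insert j T) ⊆ univ := Finset.subset_univ _
      have h2 := Finset.card_le_card h1
      rw [Finset.card_insert_of_notMem (by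
            simp only [Finset.mem_insert]
            push_neg
            exact ⟨Ne.symm hj, ht₀⟩),
        Finset.card_insert_of_notMem hjT, Finset.card_univ, Fintype.card_fin] at h2
      omega
    have hlin : Sum.inl t₀ ∉ S := by
      intro h
      exact ht₀ (mem_filter.mpr ⟨mem_univ t₀, h⟩)
    have hrin : Sum.inr t₀ ∉ S := by
      rw [himg]
      intro h
      obtain ⟨i, _, heq⟩ := mem_image.mp h
      exact Sum.inl_ne_inr heq
    refine cut_intro (u := Sum.inr t₀) (v := Sum.inl t₀)
      (by exact_mod_cast hrin) (by exact_mod_cast hlin) ?_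
    intro h
    rcases rch_cases_head h with heq | ⟨c, hc', -⟩
    · exact Sum.inr_ne_inl heq
    · cases c with
      | inl c' =>
          have hne : t₀ ≠ c' := kss_adj_inr_inl.mp hc'.2.2
          exact hc'.2.1 (by exact_mod_cast hfull c' (Ne.symm hne))
      | inr c' => exact kss_adj_inr_inr hc'.2.2
  · set T : Finset (Fin (k + 1)) := univ.filter (fun i => Sum.inr i ∈ S) with hTdef
    have himg : S = T.image (Sum.inr : Fin (k+1) → Fin (k+1) ⊕ Fin (k+1)) := by
      ext x
      constructor
      · intro hx
        obtain ⟨i, rfl⟩ := hall x hx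
        exact mem_image_of_mem _ (mem_filter.mpr ⟨mem_univ i, hx⟩)
      · intro hx
        obtain ⟨i, hi, rfl⟩ := mem_image.mp hx
        exact (mem_filter.mp hi).2
    have hTc : T.card = k := by
      have := Finset.card_image_of_injective T (Sum.inr_injective : Function.Injective (Sum.inr : Fin (k+1) → Fin (k+1) ⊕ Fin (k+1)))
      rw [← himg] at this
      omega
    obtain ⟨t₀, ht₀⟩ : ∃ t₀, t₀ ∉ T := by
      by_contra hall'
      push_neg at hall'
      have : T = univ := Finset.eq_univ_iff_forall.mpr hall'
      rw [this, Finset.card_univ, Fintype.card_fin] at hTc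
      omega
    have hfull : ∀ j, j ≠ t₀ → Sum.inr j ∈ S := by
      intro j hj
      by_contra hjS
      have hjT : j ∉ T := fun h => hjS (mem_filter.mp h).2
      have h1 : insert t₀ (insert j T) ⊆ univ := Finset.subset_univ _
      have h2 := Finset.card_le_card h1
      rw [Finset.card_insert_of_notMem (by
            simp only [Finset.mem_insert]
            push_neg
            exact ⟨Ne.symm hj, ht₀⟩),
        Finset.card_insert_of_notMem hjT, Finset.card_univ, Fintype.card_fin] at h2
      omega
    have hlin : Sum.inr t₀ ∉ S := by
      intro h
      exact ht₀ (mem_filter.mpr ⟨mem_univ t₀, h⟩)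
    have hrin : Sum.inl t₀ ∉ S := by
      rw [himg]
      intro h
      obtain ⟨i, _, heq⟩ := mem_image.mp h
      exact Sum.inl_ne_inr heq.symm
    refine cut_intro (u := Sum.inl t₀) (v := Sum.inr t₀)
      (by exact_mod_cast hrin) (by exact_mod_cast hlin) ?_
    intro h
    rcases rch_cases_head h with heq | ⟨c, hc', -⟩
    · exact Sum.inl_ne_inr heq
    · cases c with
      | inr c' =>
          have hne : t₀ ≠ c' := kss_adj_inl_inr.mp hc'.2.2
          exact hc'.2.1 (by exact_mod_cast hfull c' (Ne.symm hne))
      | inl c' => exact kss_adj_inl_inl hc'.2.2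

end Kss

end KAux
theorem stmt0 (k : ℕ) (hk : 3 ≤ k) (V : Type) [Fintype V] (G : SimpleGraph V) :
    (KConnected G k ∧ (∃ S : Finset V, IsIndep G ↑S ∧ k < S.card) ∧
      (∀ S : Finset V, IsIndep G ↑S → S.card = k → IsVertexCut G ↑S)) ↔
    Nonempty (G ≃g KssMinusPM (k + 1)) := by
  classical
  constructor
  · rintro ⟨H1, ⟨S, hSi, hSc⟩, H3⟩
    obtain ⟨A, hAS, hAc⟩ := Finset.exists_subset_card_eq (s := S) (n := k + 1) (by omega)
    exact KAux.forward hk H1 H3 A (hSi.mono (by exact_mod_cast Finset.coe_subset.mpr hAS)) hAc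
  · rintro ⟨e⟩
    refine ⟨⟨?_, ?_⟩, ?_, ?_⟩
    · -- k < card V
      have hcV : Fintype.card V = Fintype.card (Fin (k + 1) ⊕ Fin (k + 1)) :=
        Fintype.card_congr e.toEquiv
      rw [hcV, Fintype.card_sum, Fintype.card_fin]
      omega
    · -- no small cuts
      intro S hS hcut
      obtain ⟨u, v, hu, hv, hnr⟩ := KAux.cut_elim hcut
      rw [Finset.mem_coe] at hu hv
      apply hnr
      have hScd : (S.image (e : V → Fin (k + 1) ⊕ Fin (k + 1))).card < k :=
        lt_of_le_of_lt Finset.card_image_le hS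
      have hmem : ∀ x, x ∉ S → (e : V → Fin (k + 1) ⊕ Fin (k + 1)) x ∉ S.image e := by
        intro x hx hmem'
        obtain ⟨y, hy, heq⟩ := Finset.mem_image.mp hmem'
        exact hx (e.toEquiv.injective heq ▸ hy)
      have hK : KAux.Rch (KssMinusPM (k + 1)) ↑(S.image (e : V → Fin (k + 1) ⊕ Fin (k + 1)))
          (e u) (e v) :=
        KAux.kss_preconn hk _ hScd _ _ (hmem u hu) (hmem v hv)
      have hback := KAux.rch_map e.symm hK
      have hset : ((e.symm : Fin (k + 1) ⊕ Fin (k + 1) → V) ''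
          ↑(S.image (e : V → Fin (k + 1) ⊕ Fin (k + 1)))) = (↑S : Set V) := by
        ext x
        constructor
        · rintro ⟨y, hy, rfl⟩
          obtain ⟨z, hz, rfl⟩ := Finset.mem_image.mp (by exact_mod_cast hy)
          rw [RelIso.symm_apply_apply]
          exact_mod_cast hz
        · intro hx
          refine ⟨e x, ?_, RelIso.symm_apply_apply e x⟩
          exact_mod_cast Finset.mem_image_of_mem _ (by exact_mod_cast hx)
      rw [hset, RelIso.symm_apply_apply, RelIso.symm_apply_apply] at hback
      exact hback
    · -- large independent set
      refine ⟨((Finset.univ.image (Sum.inl : Fin (k + 1) → Fin (k + 1) ⊕ Fin (k + 1)))).image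
        (e.symm : Fin (k + 1) ⊕ Fin (k + 1) → V), ?_, ?_⟩
      · intro x hx y hy hne hadj
        obtain ⟨x', hx', rfl⟩ := Finset.mem_image.mp (by exact_mod_cast hx)
        obtain ⟨y', hy', rfl⟩ := Finset.mem_image.mp (by exact_mod_cast hy)
        have hadj' : (KssMinusPM (k + 1)).Adj x' y' := e.symm.map_adj_iff.mp hadj
        obtain ⟨i, _, rfl⟩ := Finset.mem_image.mp hx'
        obtain ⟨j, _, rfl⟩ := Finset.mem_image.mp hy'
        exact KAux.kss_adj_inl_inl hadj'
      · rw [Finset.card_image_of_injective _ e.symm.injective,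
          Finset.card_image_of_injective _
            (Sum.inl_injective : Function.Injective
              (Sum.inl : Fin (k + 1) → Fin (k + 1) ⊕ Fin (k + 1))),
          Finset.card_univ, Fintype.card_fin]
        omega
    · -- independent k-sets are cuts
      intro S hind hc
      set S' : Finset (Fin (k + 1) ⊕ Fin (k + 1)) := S.image (e : V → Fin (k + 1) ⊕ Fin (k + 1))
        with hS'def
      have hindS' : IsIndep (KssMinusPM (k + 1)) ↑S' := by
        intro x hx y hy hne hadj
        obtain ⟨x', hx', rfl⟩ := Finset.mem_image.mp (by exact_mod_cast hx)
        obtain ⟨y', hy', rfl⟩ := Finset.mem_image.mp (by exact_mod_cast hy)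
        have hne' : x' ≠ y' := fun h => hne (by rw [h])
        exact hind (by exact_mod_cast hx') (by exact_mod_cast hy') hne' (e.map_adj_iff.mp hadj)
      have hcS' : S'.card = k := by
        rw [hS'def, Finset.card_image_of_injective _ e.injective]
        exact hc
      have hKcut := KAux.kss_cut hk S' hindS' hcS'
      obtain ⟨p, q, hp, hq, hnr⟩ := KAux.cut_elim hKcut
      have hmemb : ∀ x : Fin (k + 1) ⊕ Fin (k + 1), x ∉ S' →
          (e.symm : Fin (k + 1) ⊕ Fin (k + 1) → V) x ∉ (↑S : Set V) := by
        intro x hx h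
        apply hx
        have : e (e.symm x) ∈ S' := Finset.mem_image_of_mem _ (by exact_mod_cast h)
        rwa [RelIso.apply_symm_apply] at this
      refine KAux.cut_intro (u := e.symm p) (v := e.symm q)
        (hmemb p (by exact_mod_cast hp)) (hmemb q (by exact_mod_cast hq)) ?_
      intro h
      have hfwd := KAux.rch_map e h
      have hset : ((e : V → Fin (k + 1) ⊕ Fin (k + 1)) '' (↑S : Set V)) = ↑S' := by
        rw [hS'def]
        exact (Finset.coe_image).symm
      rw [hset, RelIso.apply_symm_apply, RelIso.apply_symm_apply] at hfwd
      exact hnr hfwd
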